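/- arXiv:1906.09649 — 6 statements merged into one kernel-verified Lean document; each statement's English description precedes it below -/
import Mathlib

section
/- If $GF\Omega \xrightarrow{\omega} \Omega$ is an initial $GF$-algebra, then $FGF\Omega \xrightarrow{F\omega} F\Omega$ is an initial $FG$-algebra. -/
open CategoryTheory CategoryTheory.Limits

universe v v₂ u u₂

/-- If `GF Ω → Ω` is an initial `GF`-algebra, then `FGF Ω → F Ω` is an initial
`FG`-algebra.  Note that in Mathlib notation `GF = F ⋙ G` and `FG = G ⋙ F`. -/
theorem initial_algebra_reflect {C : Type u} [Category.{v} C] {D : Type u₂} [Category.{v₂} D]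
    (F : C ⥤ D) (G : D ⥤ C) (A : Endofunctor.Algebra (F ⋙ G))
    (h : IsInitial A) :
    Nonempty (IsInitial (⟨F.obj A.a, F.map A.str⟩ : Endofunctor.Algebra (G ⋙ F))) := by
  have hiso : IsIso A.str := Endofunctor.Algebra.Initial.str_isIso h
  refine ⟨IsInitial.ofUniqueHom (fun B => ?_) (fun B m => ?_)⟩
  · -- construct the morphism
    exact
      { f := F.map (h.to ⟨G.obj B.a, G.map B.str⟩).f ≫ B.str
        h := by
          have hh := (h.to ⟨G.obj B.a, G.map B.str⟩).h
          dsimp at hh ⊢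
          rw [G.map_comp, F.map_comp, ← Category.assoc, ← F.map_comp, hh,
            F.map_comp, Category.assoc] }
  · -- uniqueness
    have hm := m.h
    dsimp at hm
    have key : (h.to ⟨G.obj B.a, G.map B.str⟩).f = inv A.str ≫ G.map m.f := by
      have : (⟨inv A.str ≫ G.map m.f, by
        dsimp
        rw [F.map_comp, G.map_comp, Category.assoc, ← G.map_comp, hm,
          G.map_comp, ← Category.assoc, ← G.map_comp, ← F.map_comp]
        simp⟩ : A ⟶ (⟨G.obj B.a, G.map B.str⟩ : Endofunctor.Algebra (F ⋙ G))) =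
          h.to ⟨G.obj B.a, G.map B.str⟩ := h.hom_ext _ _
      rw [← this]
    ext
    dsimp
    rw [key, F.map_comp, Category.assoc, hm, ← Category.assoc, ← F.map_comp]
    simp
end

section
/- If $\Omega \xrightarrow{\omega} GF\Omega$ is a final $GF$-coalgebra, then $F\Omega \xrightarrow{F\omega} FGF\Omega$ is a final $FG$-coalgebra. -/
open CategoryTheory CategoryTheory.Limits

universe v v₂ u u₂

/-- If `Ω → GF Ω` is a final `GF`-coalgebra, then `F Ω → FGF Ω` is a final
`FG`-coalgebra.  Note that in Mathlib notation `GF = F ⋙ G` and `FG = G ⋙ F`. -/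
theorem final_coalgebra_reflect {C : Type u} [Category.{v} C] {D : Type u₂} [Category.{v₂} D]
    (F : C ⥤ D) (G : D ⥤ C) (V : Endofunctor.Coalgebra (F ⋙ G))
    (h : IsTerminal V) :
    Nonempty (IsTerminal (⟨F.obj V.V, F.map V.str⟩ : Endofunctor.Coalgebra (G ⋙ F))) := by
  -- Lambek: V.str is an isomorphism. Build its inverse j.
  let V' : Endofunctor.Coalgebra (F ⋙ G) := ⟨(F ⋙ G).obj V.V, (F ⋙ G).map V.str⟩
  let jh := h.from V'
  let j : (F ⋙ G).obj V.V ⟶ V.V := jh.f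
  have hj : (F ⋙ G).map V.str ≫ (F ⋙ G).map j = j ≫ V.str := jh.h
  have hsj : V.str ≫ j = 𝟙 V.V := by
    have : (Endofunctor.Coalgebra.Hom.comp
        (⟨V.str, rfl⟩ : V ⟶ V') jh) = 𝟙 V := h.hom_ext _ _
    have := congrArg Endofunctor.Coalgebra.Hom.f this
    simpa using this
  have hjs : j ≫ V.str = 𝟙 ((F ⋙ G).obj V.V) := by
    rw [← hj, ← Functor.map_comp, hsj]; simp
  refine ⟨IsTerminal.ofUniqueHom (fun A => ?_) (fun A m => ?_)⟩
  · -- existence: GA is a (F ⋙ G)-coalgebra, get k : G A.V ⟶ V.V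
    let GA : Endofunctor.Coalgebra (F ⋙ G) := ⟨G.obj A.V, G.map A.str⟩
    let kh := h.from GA
    refine ⟨A.str ≫ F.map kh.f, ?_⟩
    have hk : G.map A.str ≫ G.map (F.map kh.f) = kh.f ≫ V.str := kh.h
    show A.str ≫ (G ⋙ F).map (A.str ≫ F.map kh.f) = (A.str ≫ F.map kh.f) ≫ F.map V.str
    simp only [Functor.comp_map, Functor.map_comp, Category.assoc]
    rw [← Functor.map_comp F, ← Functor.map_comp F, hk, Functor.map_comp]
  · -- uniqueness
    let GA : Endofunctor.Coalgebra (F ⋙ G) := ⟨G.obj A.V, G.map A.str⟩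
    have hm : A.str ≫ F.map (G.map m.f) = m.f ≫ F.map V.str := m.h
    have inner : A.str ≫ F.map (G.map m.f ≫ j) = m.f := by
      rw [Functor.map_comp, ← Category.assoc, hm, Category.assoc, ← Functor.map_comp,
        hsj]; simp
    have key : G.map A.str ≫ (F ⋙ G).map (G.map m.f ≫ j) = (G.map m.f ≫ j) ≫ V.str := by
      show G.map A.str ≫ G.map (F.map (G.map m.f ≫ j)) = (G.map m.f ≫ j) ≫ V.str
      rw [← Functor.map_comp G, inner, Category.assoc, hjs]; simp
    have huniq : (⟨G.map m.f ≫ j, key⟩ : GA ⟶ V) = h.from GA := h.hom_ext _ _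
    have hf : G.map m.f ≫ j = (h.from GA).f := congrArg Endofunctor.Coalgebra.Hom.f huniq
    ext
    show m.f = A.str ≫ F.map (h.from GA).f
    rw [← hf, inner]
end

section
/- The composite functor $FG : \mathbf{D} \to \mathbf{D}$ has an initial algebra if and only if $GF : \mathbf{C} \to \mathbf{C}$ has an initial algebra. -/
open CategoryTheory CategoryTheory.Limits

universe v v₂ u u₂

section Aux

variable {C : Type u} [Category.{v} C] {D : Type u₂} [Category.{v₂} D]
  (F : C ⥤ D) (G : D ⥤ C)

/-- From an initial algebra `A` of `F ⋙ G`, build an initial algebra `F A` of `G ⋙ F`. -/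
theorem initial_algebra_transfer
    (h : ∃ A : Endofunctor.Algebra (F ⋙ G), Nonempty (IsInitial A)) :
    ∃ B : Endofunctor.Algebra (G ⋙ F), Nonempty (IsInitial B) := by
  obtain ⟨A, ⟨hA⟩⟩ := h
  refine ⟨⟨F.obj A.a, F.map A.str⟩, ⟨IsInitial.ofUniqueHom (fun Y => ?_) (fun Y m => ?_)⟩⟩
  · -- the canonical hom to `Y`
    exact
      { f := F.map (hA.to ⟨G.obj Y.a, G.map Y.str⟩).f ≫ Y.str
        h := by
          have hc := (hA.to ⟨G.obj Y.a, G.map Y.str⟩).h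
          dsimp at hc ⊢
          rw [G.map_comp, hc, F.map_comp, Category.assoc] }
  · -- uniqueness
    have : IsIso A.str := Endofunctor.Algebra.Initial.str_isIso hA
    have hm := m.h
    dsimp at hm
    -- `k` is an algebra morphism `A ⟶ (G Y, G Y.str)`
    have hk : (Endofunctor.Algebra.Hom.mk (inv A.str ≫ G.map m.f)
        (by
          dsimp
          rw [F.map_comp, G.map_comp, Category.assoc, ← G.map_comp, hm,
            IsIso.hom_inv_id_assoc, G.map_comp, ← Category.assoc, ← G.map_comp,
            ← F.map_comp, IsIso.inv_hom_id, F.map_id, G.map_id, Category.id_comp]) :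
        A ⟶ (⟨G.obj Y.a, G.map Y.str⟩ : Endofunctor.Algebra (F ⋙ G))) =
        hA.to ⟨G.obj Y.a, G.map Y.str⟩ := hA.hom_ext _ _
    have hk' : inv A.str ≫ G.map m.f = (hA.to ⟨G.obj Y.a, G.map Y.str⟩).f :=
      congrArg Endofunctor.Algebra.Hom.f hk
    ext
    dsimp
    rw [← hk', F.map_comp, Category.assoc, hm, ← Category.assoc, ← F.map_comp,
      IsIso.inv_hom_id, F.map_id, Category.id_comp]

end Aux

/-- `FG` has an initial algebra iff `GF` does.  In Mathlib notation `FG = G ⋙ F`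
(an endofunctor on `D`) and `GF = F ⋙ G` (an endofunctor on `C`). -/
theorem initial_algebra_iff {C : Type u} [Category.{v} C] {D : Type u₂} [Category.{v₂} D]
    (F : C ⥤ D) (G : D ⥤ C) :
    (∃ B : Endofunctor.Algebra (G ⋙ F), Nonempty (IsInitial B)) ↔
      (∃ A : Endofunctor.Algebra (F ⋙ G), Nonempty (IsInitial A)) := by
  constructor
  · exact initial_algebra_transfer G F
  · exact initial_algebra_transfer F G
end

section
/- The composite functor $FG : \mathbf{D} \to \mathbf{D}$ has a final coalgebra if and only if $GF : \mathbf{C} \to \mathbf{C}$ has a final coalgebra. -/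
open CategoryTheory CategoryTheory.Limits

universe v v₂ u u₂

section Aux

/-- Lambek's lemma for coalgebras: the structure map of a terminal coalgebra is an
isomorphism; we only need the explicit two-sided inverse. -/
theorem lambek_coalgebra {C : Type u} [Category.{v} C] {T : C ⥤ C}
    (B : Endofunctor.Coalgebra T) (hB : IsTerminal B) :
    ∃ ι : T.obj B.V ⟶ B.V, B.str ≫ ι = 𝟙 B.V ∧ ι ≫ B.str = 𝟙 (T.obj B.V) := by
  let B' : Endofunctor.Coalgebra T := ⟨T.obj B.V, T.map B.str⟩
  let i : B' ⟶ B := hB.from B'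
  have key : B.str ≫ i.f = 𝟙 B.V := by
    have : (⟨B.str ≫ i.f, by
        have hi := i.h
        simp only [B'] at hi
        rw [Functor.map_comp, hi, Category.assoc]⟩ : B ⟶ B) = 𝟙 B :=
      hB.hom_ext _ _
    simpa using congrArg Endofunctor.Coalgebra.Hom.f this
  refine ⟨i.f, key, ?_⟩
  have hi := i.h
  simp only [B'] at hi
  rw [← hi, ← T.map_comp, key, T.map_id]

/-- If `G ⋙ F` has a terminal coalgebra, so does `F ⋙ G`. -/
theorem final_coalgebra_transfer {C : Type u} [Category.{v} C] {D : Type u₂} [Category.{v₂} D]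
    (F : C ⥤ D) (G : D ⥤ C)
    (B : Endofunctor.Coalgebra (G ⋙ F)) (hB : IsTerminal B) :
    ∃ A : Endofunctor.Coalgebra (F ⋙ G), Nonempty (IsTerminal A) := by
  obtain ⟨ι, hι₁, hι₂⟩ := lambek_coalgebra B hB
  refine ⟨⟨G.obj B.V, G.map B.str⟩, ⟨IsTerminal.ofUniqueHom (fun X => ?_) (fun X g => ?_)⟩⟩
  · -- the canonical map
    let X' : Endofunctor.Coalgebra (G ⋙ F) := ⟨F.obj X.V, F.map X.str⟩
    let h : X' ⟶ B := hB.from X'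
    refine ⟨X.str ≫ G.map h.f, ?_⟩
    have hh := h.h
    simp only [X'] at hh
    have : h.f ≫ B.str = F.map X.str ≫ F.map (G.map h.f) := by
      simpa using hh.symm
    show X.str ≫ G.map (F.map (X.str ≫ G.map h.f)) = (X.str ≫ G.map h.f) ≫ G.map B.str
    rw [Category.assoc, ← G.map_comp, this, F.map_comp]
  · -- uniqueness
    let X' : Endofunctor.Coalgebra (G ⋙ F) := ⟨F.obj X.V, F.map X.str⟩
    let h : X' ⟶ B := hB.from X'
    have hg := g.h
    simp only [Functor.comp_map] at hg
    -- g.f lifts to a coalgebra hom X' ⟶ B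
    have hgB : g.f ≫ G.map B.str = X.str ≫ G.map (F.map g.f) := by
      simpa using hg.symm
    let hg' : X' ⟶ B := ⟨F.map g.f ≫ ι, by
      show F.map X.str ≫ F.map (G.map (F.map g.f ≫ ι)) = (F.map g.f ≫ ι) ≫ B.str
      have hι₂' : ι ≫ B.str = 𝟙 (F.obj (G.obj B.V)) := hι₂
      rw [Category.assoc, hι₂', Category.comp_id, G.map_comp, F.map_comp,
        ← Category.assoc, ← F.map_comp, ← hgB]
      rw [F.map_comp, Category.assoc, ← F.map_comp, ← G.map_comp, hι₁]
      simp⟩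
    have huniq : hg' = h := hB.hom_ext _ _
    have : g.f = X.str ≫ G.map h.f := by
      rw [← huniq]
      show g.f = X.str ≫ G.map (F.map g.f ≫ ι)
      rw [G.map_comp, ← Category.assoc, ← hgB, Category.assoc, ← G.map_comp, hι₁]
      simp
    ext
    exact this

end Aux

/-- `FG` has a final coalgebra iff `GF` does.  In Mathlib notation `FG = G ⋙ F`
(an endofunctor on `D`) and `GF = F ⋙ G` (an endofunctor on `C`). -/
theorem final_coalgebra_iff {C : Type u} [Category.{v} C] {D : Type u₂} [Category.{v₂} D]
    (F : C ⥤ D) (G : D ⥤ C) :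
    (∃ B : Endofunctor.Coalgebra (G ⋙ F), Nonempty (IsTerminal B)) ↔
      (∃ A : Endofunctor.Coalgebra (F ⋙ G), Nonempty (IsTerminal A)) := by
  constructor
  · rintro ⟨B, ⟨hB⟩⟩
    exact final_coalgebra_transfer F G B hB
  · rintro ⟨A, ⟨hA⟩⟩
    exact final_coalgebra_transfer G F A hA
end

section
/- The composite $FG$ is algebraically compact if and only if $GF$ is algebraically compact. -/
open CategoryTheory CategoryTheory.Limits

universe v v₂ u u₂

/-- An endofunctor is algebraically compact if it has an initial algebra whose structure
map is an isomorphism and whose inverse is a final coalgebra. -/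
def AlgebraicallyCompact {C : Type u} [Category.{v} C] (T : C ⥤ C) : Prop :=
  ∃ (A : Endofunctor.Algebra T) (ω : A.a ⟶ T.obj A.a),
    Nonempty (IsInitial A) ∧ A.str ≫ ω = 𝟙 _ ∧ ω ≫ A.str = 𝟙 _ ∧
    Nonempty (IsTerminal (⟨A.a, ω⟩ : Endofunctor.Coalgebra T))

section Aux

variable {C : Type u} [Category.{v} C] {D : Type u₂} [Category.{v₂} D]
  (F : C ⥤ D) (G : D ⥤ C)

/-- Transfer initial algebra from `G ⋙ F` to `F ⋙ G`, assuming the structure map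
is invertible with inverse `ω`. -/
noncomputable def transferInitial (A : Endofunctor.Algebra (G ⋙ F))
    (ω : A.a ⟶ (G ⋙ F).obj A.a)
    (hAω : A.str ≫ ω = 𝟙 _) (hωA : ω ≫ A.str = 𝟙 _) (hA : IsInitial A) :
    IsInitial (⟨G.obj A.a, G.map A.str⟩ : Endofunctor.Algebra (F ⋙ G)) := by
  refine IsInitial.ofUniqueHom (fun B => ?_) (fun B m => ?_)
  · refine ⟨G.map (hA.to ⟨F.obj B.a, F.map B.str⟩).f ≫ B.str, ?_⟩
    have hb := (hA.to (⟨F.obj B.a, F.map B.str⟩ : Endofunctor.Algebra (G ⋙ F))).h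
    dsimp at hb ⊢
    rw [F.map_comp, hb, G.map_comp, Category.assoc]
  · have uniq : ∀ (m : (⟨G.obj A.a, G.map A.str⟩ : Endofunctor.Algebra (F ⋙ G)) ⟶ B),
        m.f = G.map (hA.to (⟨F.obj B.a, F.map B.str⟩ :
          Endofunctor.Algebra (G ⋙ F))).f ≫ B.str := by
      intro m
      have hm := m.h
      dsimp at hm
      have hm2 : F.map (G.map (F.map m.f)) ≫ F.map B.str
          = F.map (G.map A.str) ≫ F.map m.f := by
        rw [← F.map_comp, ← F.map_comp, hm]
      have key : hA.to (⟨F.obj B.a, F.map B.str⟩ : Endofunctor.Algebra (G ⋙ F))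
          = ⟨ω ≫ F.map m.f, by
              dsimp
              rw [G.map_comp, F.map_comp, Category.assoc, hm2, ← Category.assoc,
                ← F.map_comp, ← G.map_comp, hωA, ← Category.assoc, hAω]
              simp⟩ := hA.hom_ext _ _
      rw [key]
      dsimp
      rw [G.map_comp, Category.assoc, hm, ← Category.assoc, ← G.map_comp, hωA]
      simp
    ext
    rw [uniq m]

/-- Transfer final coalgebra from `G ⋙ F` to `F ⋙ G`. -/
noncomputable def transferTerminal (A : Endofunctor.Algebra (G ⋙ F))
    (ω : A.a ⟶ (G ⋙ F).obj A.a)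
    (hAω : A.str ≫ ω = 𝟙 _) (hωA : ω ≫ A.str = 𝟙 _)
    (hT : IsTerminal (⟨A.a, ω⟩ : Endofunctor.Coalgebra (G ⋙ F))) :
    IsTerminal (⟨G.obj A.a, G.map ω⟩ : Endofunctor.Coalgebra (F ⋙ G)) := by
  refine IsTerminal.ofUniqueHom (fun B => ?_) (fun B m => ?_)
  · refine ⟨B.str ≫ G.map (hT.from ⟨F.obj B.V, F.map B.str⟩).f, ?_⟩
    have hb := (hT.from (⟨F.obj B.V, F.map B.str⟩ : Endofunctor.Coalgebra (G ⋙ F))).h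
    dsimp at hb ⊢
    rw [F.map_comp, hb, G.map_comp, Category.assoc]
  · have uniq : ∀ (m : B ⟶ (⟨G.obj A.a, G.map ω⟩ : Endofunctor.Coalgebra (F ⋙ G))),
        m.f = B.str ≫ G.map (hT.from (⟨F.obj B.V, F.map B.str⟩ :
          Endofunctor.Coalgebra (G ⋙ F))).f := by
      intro m
      have hm := m.h
      dsimp at hm
      have hm2 : F.map B.str ≫ F.map (G.map (F.map m.f))
          = F.map m.f ≫ F.map (G.map ω) := by
        rw [← F.map_comp, ← F.map_comp, hm]
      have key : hT.from (⟨F.obj B.V, F.map B.str⟩ : Endofunctor.Coalgebra (G ⋙ F))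
          = ⟨F.map m.f ≫ A.str, by
              dsimp
              rw [G.map_comp, F.map_comp, ← Category.assoc, hm2, Category.assoc,
                ← F.map_comp, ← G.map_comp, hωA, Category.assoc, hAω]
              simp⟩ := hT.hom_ext _ _
      rw [key]
      dsimp
      rw [G.map_comp, ← Category.assoc, hm, Category.assoc, ← G.map_comp, hωA]
      simp
    ext
    rw [uniq m]

theorem algCompact_transfer :
    AlgebraicallyCompact (G ⋙ F) → AlgebraicallyCompact (F ⋙ G) := by
  rintro ⟨A, ω, ⟨hI⟩, hAω, hωA, ⟨hT⟩⟩
  refine ⟨⟨G.obj A.a, G.map A.str⟩, G.map ω, ⟨transferInitial F G A ω hAω hωA hI⟩, ?_, ?_,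
    ⟨transferTerminal F G A ω hAω hωA hT⟩⟩
  · rw [← G.map_comp, hAω]; simp
  · rw [← G.map_comp, hωA]; simp

end Aux

/-- `FG` is algebraically compact iff `GF` is.  In Mathlib notation `FG = G ⋙ F`
(an endofunctor on `D`) and `GF = F ⋙ G` (an endofunctor on `C`). -/
theorem algCompact_iff {C : Type u} [Category.{v} C] {D : Type u₂} [Category.{v₂} D]
    (F : C ⥤ D) (G : D ⥤ C) :
    AlgebraicallyCompact (G ⋙ F) ↔ AlgebraicallyCompact (F ⋙ G) := by
  exact ⟨algCompact_transfer F G, algCompact_transfer G F⟩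
end

section
/- If $T : \mathbf{C} \to \mathbf{C}$ factors as $T \cong G \circ F$ through a category $\mathbf{D}$ on which every endofunctor has an initial algebra, then for any endofunctor $H : \mathbf{C} \to \mathbf{C}$, the composite $H \circ T$ has an initial algebra. -/
open CategoryTheory CategoryTheory.Limits

universe v v₂ u u₂

section Rolling

open Endofunctor

variable {C : Type u} [Category.{v} C] {D : Type u₂} [Category.{v₂} D]

/-- The rolling rule: if `Q ⋙ P : D ⥤ D` has an initial algebra, then so does
`P ⋙ Q : C ⥤ C`. -/
theorem rolling_initial_algebra (P : C ⥤ D) (Q : D ⥤ C)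
    (A : Algebra (Q ⋙ P)) (hA : IsInitial A) :
    ∃ B : Algebra (P ⋙ Q), Nonempty (IsInitial B) := by
  haveI : IsIso A.str := Algebra.Initial.str_isIso hA
  refine ⟨⟨Q.obj A.a, Q.map A.str⟩, ⟨IsInitial.ofUniqueHom
    (fun Y => { f := Q.map (hA.to ⟨P.obj Y.a, P.map Y.str⟩).f ≫ Y.str
                h := ?_ }) (fun Y m => ?_)⟩⟩
  · -- existence
    have hf := (hA.to ⟨P.obj Y.a, P.map Y.str⟩).h
    dsimp at hf ⊢
    rw [Functor.map_comp, Functor.map_comp, Category.assoc, ← Category.assoc,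
      ← Q.map_comp, hf, Q.map_comp, Category.assoc]
  · -- uniqueness
    set f := hA.to ⟨P.obj Y.a, P.map Y.str⟩ with hfdef
    have hm := m.h
    dsimp at hm
    -- the morphism `A ⟶ ⟨P Y.a, P.map Y.str⟩` induced by `m`
    have key : inv A.str ≫ P.map m.f = f.f := by
      have : (⟨inv A.str ≫ P.map m.f, ?_⟩ : A ⟶ ⟨P.obj Y.a, P.map Y.str⟩) = f :=
        hA.hom_ext _ _
      · exact congrArg Endofunctor.Algebra.Hom.f this
      · dsimp
        rw [Functor.map_comp, Functor.map_comp, Category.assoc, ← Functor.map_comp P,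
          hm, Functor.map_comp, ← Category.assoc, ← Functor.map_comp P,
          ← Functor.map_comp Q, IsIso.inv_hom_id, Q.map_id, P.map_id, Category.id_comp,
          IsIso.hom_inv_id_assoc]
    have hPm : P.map m.f = A.str ≫ f.f := by
      rw [← key, IsIso.hom_inv_id_assoc]
    ext
    dsimp
    have : Q.map A.str ≫ m.f = Q.map A.str ≫ Q.map f.f ≫ Y.str := by
      rw [← hm, hPm, Functor.map_comp, Category.assoc]
    exact (cancel_epi (Q.map A.str)).mp this

end Rolling

/-- If `T ≅ G ∘ F` factors through a category `D` on which every endofunctor has an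
initial algebra, then for every endofunctor `H` on `C` the composite `H ∘ T = T ⋙ H`
has an initial algebra. -/
theorem initial_algebra_comp_of_factorisation {C : Type u} [Category.{v} C]
    {D : Type u₂} [Category.{v₂} D]
    (T : C ⥤ C) (F : C ⥤ D) (G : D ⥤ C) (i : T ≅ F ⋙ G)
    (hD : ∀ S : D ⥤ D, ∃ A : Endofunctor.Algebra S, Nonempty (IsInitial A))
    (H : C ⥤ C) :
    ∃ A : Endofunctor.Algebra (T ⋙ H), Nonempty (IsInitial A) := by
  obtain ⟨A, ⟨hA⟩⟩ := hD ((G ⋙ H) ⋙ F)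
  obtain ⟨B, ⟨hB⟩⟩ := rolling_initial_algebra F (G ⋙ H) A hA
  -- transport along the natural isomorphism `T ⋙ H ≅ F ⋙ (G ⋙ H)`
  let e : Endofunctor.Algebra (F ⋙ G ⋙ H) ≌ Endofunctor.Algebra (T ⋙ H) :=
    Endofunctor.Algebra.equivOfNatIso
      ((Functor.associator F G H).symm ≪≫ (Functor.isoWhiskerRight i H).symm)
  exact ⟨e.functor.obj B, ⟨hB.isInitialObj e.functor B⟩⟩
end
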